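/- If C = (1, c₂, c₃, c₄, c₅, 2c₅ − c₃) is canonical and the subsystem (1, c₂, c₃, c₄, c₅) is noncanonical, then C equals (1, c₂, 2c₂−1, c₄, c₂+c₄−1, 2c₄−1) or (1, c₂, 2c₂, c₄, c₂+c₄, 2c₄). -/
import Mathlib


open Finset

/-- `x` is a representation of value `v` in the coin system `c 1, …, c n`. -/
def IsRepr (n : ℕ) (c : ℕ → ℕ) (v : ℕ) (x : ℕ → ℕ) : Prop :=
  ∑ i ∈ Finset.Icc 1 n, c i * x i = v

/-- Minimum number of coins over all representations of `v`. -/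
noncomputable def opt (n : ℕ) (c : ℕ → ℕ) (v : ℕ) : ℕ :=
  sInf {k | ∃ x : ℕ → ℕ, IsRepr n c v x ∧ ∑ i ∈ Finset.Icc 1 n, x i = k}

/-- Number of coins used by the greedy algorithm to pay `v`. -/
def grd (n : ℕ) (c : ℕ → ℕ) (v : ℕ) : ℕ :=
  if hv : v = 0 then 0
  else
    let m := ((Finset.Icc 1 n).filter (fun i => c i ≤ v)).sup c
    if hm : 0 < m then grd n c (v - m) + 1 else 0
termination_by v
decreasing_by omega

/-- The system is canonical: greedy is optimal for every positive value. -/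
def Canonical (n : ℕ) (c : ℕ → ℕ) : Prop :=
  ∀ v, 0 < v → opt n c v = grd n c v

/-- `w` is a counterexample to the system. -/
def IsCex (n : ℕ) (c : ℕ → ℕ) (w : ℕ) : Prop :=
  0 < w ∧ opt n c w < grd n c w

/-- `w` is the minimum counterexample to the system. -/
def MinCex (n : ℕ) (c : ℕ → ℕ) (w : ℕ) : Prop :=
  IsCex n c w ∧ ∀ u, IsCex n c u → w ≤ u

/-- A (currency) system: first coin is `1` and coins strictly increase. -/
def IsSystem (n : ℕ) (c : ℕ → ℕ) : Prop :=
  c 1 = 1 ∧ StrictMonoOn c (Set.Icc 1 n)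

section Infra
variable {n : ℕ} {c : ℕ → ℕ}

lemma one_le_coin (hs : IsSystem n c) {i : ℕ} (hi : i ∈ Finset.Icc 1 n) : 1 ≤ c i := by
  rw [Finset.mem_Icc] at hi
  rcases eq_or_lt_of_le hi.1 with h | h
  · rw [← h, hs.1]
  · have := hs.2 (Set.mem_Icc.2 ⟨le_refl 1, by omega⟩) (Set.mem_Icc.2 ⟨by omega, hi.2⟩) h
    rw [hs.1] at this; omega

lemma coin_mono (hs : IsSystem n c) {i j : ℕ} (hi : i ∈ Finset.Icc 1 n)
    (hj : j ∈ Finset.Icc 1 n) (hij : i ≤ j) : c i ≤ c j := by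
  rw [Finset.mem_Icc] at hi hj
  rcases eq_or_lt_of_le hij with h | h
  · subst h; exact le_refl _
  · exact le_of_lt (hs.2 (Set.mem_Icc.2 ⟨hi.1, hi.2⟩) (Set.mem_Icc.2 ⟨hj.1, hj.2⟩) h)

lemma coin_pos (hs : IsSystem n c) {i : ℕ} (hi : i ∈ Finset.Icc 1 n) : 0 < c i :=
  one_le_coin hs hi

lemma opt_le {v : ℕ} {x : ℕ → ℕ} (h : IsRepr n c v x) :
    opt n c v ≤ ∑ i ∈ Finset.Icc 1 n, x i :=
  Nat.sInf_le ⟨x, h, rfl⟩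

lemma repr_ones (hs : IsSystem n c) (hn : 1 ≤ n) (v : ℕ) :
    IsRepr n c v (fun i => if i = 1 then v else 0) := by
  unfold IsRepr
  rw [Finset.sum_eq_single 1]
  · simp [hs.1]
  · intro b hb hb1; simp [hb1]
  · intro h; exact absurd (Finset.mem_Icc.2 ⟨le_refl 1, hn⟩) h

lemma optSet_nonempty (hs : IsSystem n c) (hn : 1 ≤ n) (v : ℕ) :
    {k | ∃ x : ℕ → ℕ, IsRepr n c v x ∧ ∑ i ∈ Finset.Icc 1 n, x i = k}.Nonempty :=
  ⟨_, ⟨_, repr_ones hs hn v, rfl⟩⟩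

lemma opt_spec (hs : IsSystem n c) (hn : 1 ≤ n) (v : ℕ) :
    ∃ x, IsRepr n c v x ∧ ∑ i ∈ Finset.Icc 1 n, x i = opt n c v :=
  Nat.sInf_mem (optSet_nonempty hs hn v)

lemma opt_zero : opt n c 0 = 0 := by
  have : opt n c 0 ≤ ∑ i ∈ Finset.Icc 1 n, (fun _ => 0) i := opt_le (by simp [IsRepr])
  simpa using this

lemma grd_zero : grd n c 0 = 0 := by rw [grd]; simp

section P2
variable {n : ℕ} {c : ℕ → ℕ}

lemma filter_nonempty (hs : IsSystem n c) (hn : 1 ≤ n) {v : ℕ} (hv : 1 ≤ v) :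
    1 ∈ (Finset.Icc 1 n).filter (fun i => c i ≤ v) := by
  rw [Finset.mem_filter, Finset.mem_Icc, hs.1]; omega

lemma grd_step (hs : IsSystem n c) {j v : ℕ} (hj : j ∈ Finset.Icc 1 n)
    (hle : c j ≤ v) (hmax : ∀ i ∈ Finset.Icc 1 n, c i ≤ v → c i ≤ c j) :
    grd n c v = grd n c (v - c j) + 1 := by
  have hmeq : ((Finset.Icc 1 n).filter (fun i => c i ≤ v)).sup c = c j := by
    apply le_antisymm
    · apply Finset.sup_le
      intro i hi
      rw [Finset.mem_filter] at hi
      exact hmax i hi.1 hi.2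
    · exact Finset.le_sup (Finset.mem_filter.2 ⟨hj, hle⟩)
  have hv : v ≠ 0 := by have := coin_pos hs hj; omega
  rw [grd]
  simp only [hv, dite_false, hmeq]
  rw [dif_pos (coin_pos hs hj)]

lemma grd_pos (hs : IsSystem n c) (hn : 1 ≤ n) {v : ℕ} (hv : 0 < v) : 0 < grd n c v := by
  have h1 : (1 : ℕ) ∈ Finset.Icc 1 n := Finset.mem_Icc.2 ⟨le_refl _, hn⟩
  have hm : ((Finset.Icc 1 n).filter (fun i => c i ≤ v)).sup c
      ≥ c 1 := Finset.le_sup (filter_nonempty hs hn hv)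
  rw [grd]
  have hv' : v ≠ 0 := by omega
  simp only [hv', dite_false]
  rw [dif_pos (by rw [hs.1] at hm; omega)]
  omega

lemma grd_sup_mem (hs : IsSystem n c) (hn : 1 ≤ n) {v : ℕ} (hv : 0 < v) :
    ∃ j ∈ Finset.Icc 1 n, c j ≤ v ∧
      (∀ i ∈ Finset.Icc 1 n, c i ≤ v → c i ≤ c j) := by
  obtain ⟨j, hj, hjeq⟩ := Finset.exists_mem_eq_sup _
    ⟨1, filter_nonempty hs hn hv⟩ c
  rw [Finset.mem_filter] at hj
  exact ⟨j, hj.1, hj.2, fun i hi hile =>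
    hjeq ▸ Finset.le_sup (Finset.mem_filter.2 ⟨hi, hile⟩)⟩

/-- greedy produces a representation -/
lemma grd_rep (hs : IsSystem n c) (hn : 1 ≤ n) : ∀ v, ∃ x, IsRepr n c v x ∧
    ∑ i ∈ Finset.Icc 1 n, x i = grd n c v := by
  intro v
  induction v using Nat.strong_induction_on with
  | _ v IH =>
    rcases Nat.eq_zero_or_pos v with rfl | hv
    · exact ⟨fun _ => 0, by simp [IsRepr], by simp [grd_zero]⟩
    · obtain ⟨j, hj, hle, hmax⟩ := grd_sup_mem hs hn hv
      have hstep := grd_step hs hj hle hmax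
      have hcj := coin_pos hs hj
      obtain ⟨x, hx, hxs⟩ := IH (v - c j) (by omega)
      refine ⟨fun i => x i + (if i = j then 1 else 0), ?_, ?_⟩
      · unfold IsRepr at hx ⊢
        simp only [Nat.mul_add]
        rw [Finset.sum_add_distrib, hx]
        have : ∑ i ∈ Finset.Icc 1 n, c i * (if i = j then 1 else 0) = c j := by
          rw [Finset.sum_congr rfl (fun i _ => by
            rw [show c i * (if i = j then 1 else 0) = if i = j then c j else 0 by
              split <;> simp_all])]
          rw [Finset.sum_ite_eq' _ j fun _ => c j, if_pos hj]
        omega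
      · rw [Finset.sum_add_distrib, hxs,
          Finset.sum_ite_eq' _ j fun _ => 1, if_pos hj, hstep]

lemma opt_le_grd (hs : IsSystem n c) (hn : 1 ≤ n) (v : ℕ) : opt n c v ≤ grd n c v := by
  obtain ⟨x, hx, hxs⟩ := grd_rep hs hn v
  simpa [hxs] using opt_le hx

end P2

section P3
variable {n : ℕ} {c : ℕ → ℕ}

lemma sum_mul_ite {j : ℕ} (hj : j ∈ Finset.Icc 1 n) (k : ℕ) :
    ∑ i ∈ Finset.Icc 1 n, c i * (if i = j then k else 0) = c j * k := by
  rw [Finset.sum_congr rfl (fun i _ => by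
    rw [show c i * (if i = j then k else 0) = if i = j then c j * k else 0 by
      split <;> simp_all])]
  rw [Finset.sum_ite_eq' _ j fun _ => c j * k, if_pos hj]

lemma sum_ite_one {j : ℕ} (hj : j ∈ Finset.Icc 1 n) (k : ℕ) :
    ∑ i ∈ Finset.Icc 1 n, (if i = j then k else 0) = k := by
  rw [Finset.sum_ite_eq' _ j fun _ => k, if_pos hj]

lemma coin_le_of_repr {v : ℕ} {x : ℕ → ℕ} (hx : IsRepr n c v x) {j : ℕ}
    (hj : j ∈ Finset.Icc 1 n) (h1 : 1 ≤ x j) : c j ≤ v := by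
  unfold IsRepr at hx
  calc c j ≤ c j * x j := Nat.le_mul_of_pos_right _ h1
  _ ≤ ∑ i ∈ Finset.Icc 1 n, c i * x i :=
      Finset.single_le_sum (f := fun i => c i * x i) (fun i _ => Nat.zero_le _) hj
  _ = v := hx

lemma repr_sub_single {v : ℕ} {x : ℕ → ℕ} (hx : IsRepr n c v x) {j : ℕ}
    (hj : j ∈ Finset.Icc 1 n) (h1 : 1 ≤ x j) :
    IsRepr n c (v - c j) (fun i => x i - if i = j then 1 else 0) ∧
    ∑ i ∈ Finset.Icc 1 n, (x i - if i = j then 1 else 0)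
      = (∑ i ∈ Finset.Icc 1 n, x i) - 1 := by
  have hle : ∀ i ∈ Finset.Icc 1 n, (if i = j then 1 else 0) ≤ x i := by
    intro i _; split
    · subst ‹i = j›; exact h1
    · exact Nat.zero_le _
  have hcle : ∀ i ∈ Finset.Icc 1 n, c i * (if i = j then 1 else 0) ≤ c i * x i :=
    fun i hi => Nat.mul_le_mul_left _ (hle i hi)
  constructor
  · unfold IsRepr at hx ⊢
    simp only [Nat.mul_sub]
    rw [Finset.sum_tsub_distrib _ hcle, hx, sum_mul_ite hj 1, Nat.mul_one]
  · rw [Finset.sum_tsub_distrib _ hle, sum_ite_one hj 1]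

lemma opt_pos (hs : IsSystem n c) (hn : 1 ≤ n) {v : ℕ} (hv : 0 < v) : 0 < opt n c v := by
  obtain ⟨x, hx, hxs⟩ := opt_spec hs hn v
  rcases Nat.eq_zero_or_pos (opt n c v) with h | h
  · exfalso
    rw [h] at hxs
    have : ∀ i ∈ Finset.Icc 1 n, x i = 0 := by
      intro i hi
      have := Finset.single_le_sum (f := x) (fun i _ => Nat.zero_le _) hi
      omega
    unfold IsRepr at hx
    rw [Finset.sum_congr rfl (fun i hi => by rw [this i hi, Nat.mul_zero])] at hx
    simp at hx
    omega
  · exact h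

lemma coin_of_repr_le_one {v : ℕ} {x : ℕ → ℕ} (hx : IsRepr n c v x) (hv : 0 < v)
    (hs1 : ∑ i ∈ Finset.Icc 1 n, x i ≤ 1) : ∃ j ∈ Finset.Icc 1 n, c j = v := by
  have hne : ∃ j ∈ Finset.Icc 1 n, x j ≠ 0 := by
    by_contra h
    push_neg at h
    unfold IsRepr at hx
    rw [Finset.sum_congr rfl (fun i hi => by rw [h i hi, Nat.mul_zero])] at hx
    simp at hx; omega
  obtain ⟨j, hj, hxj⟩ := hne
  refine ⟨j, hj, ?_⟩
  have hxj1 : x j = 1 := by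
    have := Finset.single_le_sum (f := x) (fun i _ => Nat.zero_le _) hj
    omega
  have hrest : ∀ i ∈ Finset.Icc 1 n, i ≠ j → x i = 0 := by
    intro i hi hij
    have h2 := Finset.add_sum_erase _ x hj
    have h3 := Finset.single_le_sum (f := x) (fun i _ => Nat.zero_le _)
      (Finset.mem_erase.2 ⟨hij, hi⟩)
    omega
  unfold IsRepr at hx
  rw [Finset.sum_congr rfl (fun i hi => by
    rw [show c i * x i = if i = j then c j * 1 else 0 by
      rcases eq_or_ne i j with rfl | hij
      · rw [hxj1, if_pos rfl]
      · rw [hrest i hi hij, if_neg hij, Nat.mul_zero]])] at hx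
  rw [Finset.sum_ite_eq' _ j fun _ => c j * 1, if_pos hj] at hx
  omega

lemma coin_of_grd_le_one (hs : IsSystem n c) (hn : 1 ≤ n) {v : ℕ} (hv : 0 < v)
    (h : grd n c v ≤ 1) : ∃ j ∈ Finset.Icc 1 n, c j = v := by
  obtain ⟨x, hx, hxs⟩ := grd_rep hs hn v
  exact coin_of_repr_le_one hx hv (by omega)

lemma coin_of_opt_le_one (hs : IsSystem n c) (hn : 1 ≤ n) {v : ℕ} (hv : 0 < v)
    (h : opt n c v ≤ 1) : ∃ j ∈ Finset.Icc 1 n, c j = v := by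
  obtain ⟨x, hx, hxs⟩ := opt_spec hs hn v
  exact coin_of_repr_le_one hx hv (by omega)

lemma opt_sub_coin (hs : IsSystem n c) (hn : 1 ≤ n) {v j : ℕ}
    (hj : j ∈ Finset.Icc 1 n) (hle : c j ≤ v) :
    opt n c v ≤ opt n c (v - c j) + 1 := by
  obtain ⟨x, hx, hxs⟩ := opt_spec hs hn (v - c j)
  have hrep : IsRepr n c v (fun i => x i + if i = j then 1 else 0) := by
    unfold IsRepr at hx ⊢
    simp only [Nat.mul_add]
    rw [Finset.sum_add_distrib, hx, sum_mul_ite hj 1]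
    omega
  have := opt_le hrep
  rw [Finset.sum_add_distrib, hxs, sum_ite_one hj 1] at this
  exact this

lemma opt_remove {v : ℕ} {x : ℕ → ℕ} (hx : IsRepr n c v x)
    (hopt : ∑ i ∈ Finset.Icc 1 n, x i = opt n c v) {j : ℕ}
    (hj : j ∈ Finset.Icc 1 n) (h1 : 1 ≤ x j) :
    opt n c (v - c j) + 1 ≤ opt n c v := by
  obtain ⟨hrep, hsum⟩ := repr_sub_single hx hj h1
  have h2 := opt_le hrep
  have h3 : 1 ≤ opt n c v := by
    have := Finset.single_le_sum (f := x) (fun i _ => Nat.zero_le _) hj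
    omega
  omega

end P3

section P4
variable {n : ℕ} {c : ℕ → ℕ}

lemma isSystem_of_succ (hs : IsSystem (n+1) c) : IsSystem n c :=
  ⟨hs.1, hs.2.mono (Set.Icc_subset_Icc_right (by omega))⟩

lemma grd_restrict (hs : IsSystem (n+1) c) (hn : 1 ≤ n) :
    ∀ v, v < c (n+1) → grd (n+1) c v = grd n c v := by
  intro v
  induction v using Nat.strong_induction_on with
  | _ v IH =>
    intro hv
    rcases Nat.eq_zero_or_pos v with rfl | hvpos
    · rw [grd_zero, grd_zero]
    · obtain ⟨j, hj, hle, hmax⟩ := grd_sup_mem hs (by omega) hvpos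
      have hjn : j ∈ Finset.Icc 1 n := by
        rw [Finset.mem_Icc] at hj ⊢
        rcases Nat.lt_or_ge j (n+1) with h | h
        · exact ⟨hj.1, by omega⟩
        · exfalso; have : j = n + 1 := by omega
          subst this; omega
      have hs' := isSystem_of_succ hs
      have h1 := grd_step hs hj hle hmax
      have h2 := grd_step hs' hjn hle (fun i hi hile => hmax i (by
        rw [Finset.mem_Icc] at hi ⊢; exact ⟨hi.1, by omega⟩) hile)
      have hcj := coin_pos hs' hjn
      rw [h1, h2, IH (v - c j) (by omega) (by omega)]

lemma opt_succ_le (hs : IsSystem (n+1) c) (hn : 1 ≤ n) (v : ℕ) :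
    opt (n+1) c v ≤ opt n c v := by
  obtain ⟨x, hx, hxs⟩ := opt_spec (isSystem_of_succ hs) hn v
  set x' : ℕ → ℕ := fun i => if i ≤ n then x i else 0 with hx'def
  have hagree : ∀ i ∈ Finset.Icc 1 n, x' i = x i := by
    intro i hi; rw [Finset.mem_Icc] at hi; simp [hx'def, hi.2]
  have hrep : IsRepr (n+1) c v x' := by
    unfold IsRepr at hx ⊢
    rw [Finset.sum_Icc_succ_top (by omega)]
    rw [Finset.sum_congr rfl (fun i hi => by rw [hagree i hi])]
    simp [hx'def, hx]
  have h4 := opt_le hrep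
  have hsum : ∑ i ∈ Finset.Icc 1 (n+1), x' i = ∑ i ∈ Finset.Icc 1 n, x i := by
    rw [Finset.sum_Icc_succ_top (show (1:ℕ) ≤ n+1 by omega),
      Finset.sum_congr rfl (fun i hi => hagree i hi)]
    have hz : x' (n+1) = 0 := by simp [hx'def]
    rw [hz]
    simp
  rw [hsum, hxs] at h4
  exact h4

lemma opt_restrict (hs : IsSystem (n+1) c) (hn : 1 ≤ n) {v : ℕ} (hv : v < c (n+1)) :
    opt n c v ≤ opt (n+1) c v := by
  obtain ⟨x, hx, hxs⟩ := opt_spec hs (by omega) v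
  have hx1 : x (n+1) = 0 := by
    by_contra h
    have := coin_le_of_repr hx (Finset.mem_Icc.2 ⟨by omega, le_refl _⟩) (by omega)
    omega
  have hrep : IsRepr n c v x := by
    unfold IsRepr at hx ⊢
    rw [Finset.sum_Icc_succ_top (by omega), hx1] at hx
    omega
  have h3 := opt_le hrep
  have h2 : ∑ i ∈ Finset.Icc 1 n, x i = opt (n+1) c v := by
    rw [Finset.sum_Icc_succ_top (show (1:ℕ) ≤ n+1 by omega)] at hxs
    omega
  exact le_of_le_of_eq h3 h2

lemma exists_min_cex (hs : IsSystem n c) (hn : 1 ≤ n) (h : ¬ Canonical n c) :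
    ∃ w, IsCex n c w ∧ ∀ u, u < w → ¬ IsCex n c u := by
  have hne : ∃ v, IsCex n c v := by
    unfold Canonical at h
    push_neg at h
    obtain ⟨v, hv, hne⟩ := h
    exact ⟨v, hv, lt_of_le_of_ne (opt_le_grd hs hn v) hne⟩
  refine ⟨sInf {u | IsCex n c u}, Nat.sInf_mem hne, fun u hu => Nat.notMem_of_lt_sInf hu⟩

end P4

section P5
variable {n : ℕ} {c : ℕ → ℕ}

lemma grd_coin (hs : IsSystem n c) {j : ℕ} (hj : j ∈ Finset.Icc 1 n) :
    grd n c (c j) = 1 := by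
  rw [grd_step hs hj (le_refl _) (fun i _ hile => hile), Nat.sub_self, grd_zero]

lemma grd_ones (hs : IsSystem n c) (hn : 2 ≤ n) : ∀ v, v < c 2 → grd n c v = v := by
  intro v
  induction v using Nat.strong_induction_on with
  | _ v IH =>
    intro hv
    rcases Nat.eq_zero_or_pos v with rfl | hvpos
    · exact grd_zero
    · have h1 : (1:ℕ) ∈ Finset.Icc 1 n := Finset.mem_Icc.2 ⟨le_refl _, by omega⟩
      have hstep := grd_step hs (j:=1) (v:=v) h1 (by rw [hs.1]; omega) (fun i hi hile => by
        rw [Finset.mem_Icc] at hi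
        rcases Nat.eq_or_lt_of_le hi.1 with h | h
        · rw [← h]
        · have : c 2 ≤ c i := coin_mono hs (Finset.mem_Icc.2 ⟨by omega, by omega⟩)
            (Finset.mem_Icc.2 ⟨by omega, hi.2⟩) h
          omega)
      rw [hstep, hs.1, IH (v - 1) (by omega) (by omega)]
      omega

lemma two_coin_le (hs : IsSystem n c) (hn : 1 ≤ n) {i j : ℕ}
    (hi : i ∈ Finset.Icc 1 n) (hj : j ∈ Finset.Icc 1 n) :
    opt n c (c i + c j) ≤ 2 := by
  have hrep : IsRepr n c (c i + c j)
      (fun k => (if k = i then 1 else 0) + (if k = j then 1 else 0)) := by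
    unfold IsRepr
    simp only [Nat.mul_add]
    rw [Finset.sum_add_distrib, sum_mul_ite hi 1, sum_mul_ite hj 1]
    ring
  have := opt_le hrep
  rw [Finset.sum_add_distrib, sum_ite_one hi 1, sum_ite_one hj 1] at this
  exact this

/-- a coin `j` s.t. removing it explains greedy cannot appear in an optimal
representation of a minimal counterexample -/
lemma uses_coin_zero (hs : IsSystem n c) (hn : 1 ≤ n) {w j : ℕ}
    (hj : j ∈ Finset.Icc 1 n)
    (hmin : ∀ u, u < w → opt n c u = grd n c u)
    (hcex : opt n c w < grd n c w)
    (heval : grd n c (w - c j) + 1 = grd n c w)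
    {x : ℕ → ℕ} (hx : IsRepr n c w x)
    (hxopt : ∑ i ∈ Finset.Icc 1 n, x i = opt n c w) : x j = 0 := by
  by_contra h
  have h1 : 1 ≤ x j := by omega
  have hcw : c j ≤ w := coin_le_of_repr hx hj h1
  have hcj := coin_pos hs hj
  have h2 := opt_remove hx hxopt hj h1
  have h3 := opt_sub_coin hs hn hj hcw
  have h4 : opt n c (w - c j) = grd n c (w - c j) := hmin _ (by omega)
  omega

lemma exchange (hs : IsSystem n c) (hn : 1 ≤ n) {w j s : ℕ}
    (hj : j ∈ Finset.Icc 1 n)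
    (hmin : ∀ u, u < w → opt n c u = grd n c u)
    {M y : ℕ → ℕ} (hM : IsRepr n c w M)
    (hMopt : ∑ i ∈ Finset.Icc 1 n, M i = opt n c w)
    (hyM : ∀ i, y i ≤ M i) (hys : ∑ i ∈ Finset.Icc 1 n, c i * y i = s)
    (hslt : s < w) (hjs : c j ≤ s)
    (hstep : grd n c s = grd n c (s - c j) + 1) :
    ∃ z, IsRepr n c w z ∧ (∑ i ∈ Finset.Icc 1 n, z i = opt n c w) ∧ 1 ≤ z j := by
  obtain ⟨g, hg, hgs⟩ := grd_rep hs hn (s - c j)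
  set z : ℕ → ℕ := fun i => (M i - y i) + ((if i = j then 1 else 0) + g i) with hzdef
  have hyrep : IsRepr n c s y := hys
  have hyopt : grd n c s ≤ ∑ i ∈ Finset.Icc 1 n, y i := by
    have h1 := opt_le hyrep
    have h2 := hmin s hslt
    omega
  have hsubsum : ∑ i ∈ Finset.Icc 1 n, c i * (M i - y i) = w - s := by
    simp only [Nat.mul_sub]
    rw [Finset.sum_tsub_distrib _ (fun i _ => Nat.mul_le_mul_left (c i) (hyM i)), hM, hys]
  have hsubcnt : ∑ i ∈ Finset.Icc 1 n, (M i - y i)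
      = (∑ i ∈ Finset.Icc 1 n, M i) - (∑ i ∈ Finset.Icc 1 n, y i) := by
    rw [Finset.sum_tsub_distrib _ (fun i _ => hyM i)]
  have hzrep : IsRepr n c w z := by
    unfold IsRepr
    simp only [hzdef, Nat.mul_add]
    rw [Finset.sum_add_distrib, Finset.sum_add_distrib, hsubsum, sum_mul_ite hj 1,
      hg, Nat.mul_one]
    omega
  have hzcnt : ∑ i ∈ Finset.Icc 1 n, z i
      = ((∑ i ∈ Finset.Icc 1 n, M i) - (∑ i ∈ Finset.Icc 1 n, y i))
        + (1 + grd n c (s - c j)) := by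
    simp only [hzdef]
    rw [Finset.sum_add_distrib, Finset.sum_add_distrib, hsubcnt, sum_ite_one hj 1, hgs]
  have hylesum : ∑ i ∈ Finset.Icc 1 n, y i ≤ ∑ i ∈ Finset.Icc 1 n, M i :=
    Finset.sum_le_sum (fun i _ => hyM i)
  have h5 := opt_le hzrep
  refine ⟨z, hzrep, ?_, ?_⟩
  · omega
  · have : z j = (M j - y j) + (1 + g j) := by simp [hzdef]
    omega

/-- partial-sum window lemma -/
lemma window {D : ℕ} (hD : 0 < D) :
    ∀ N (x : ℕ → ℕ), (∑ i ∈ Finset.Icc 1 n, x i) ≤ N →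
      (∀ i ∈ Finset.Icc 1 n, x i ≠ 0 → c i ≤ D) →
      ∀ t, t ≤ ∑ i ∈ Finset.Icc 1 n, c i * x i →
      ∃ y : ℕ → ℕ, (∀ i, y i ≤ x i) ∧ t ≤ ∑ i ∈ Finset.Icc 1 n, c i * y i ∧
        ∑ i ∈ Finset.Icc 1 n, c i * y i < t + D := by
  intro N
  induction N with
  | zero =>
    intro x hxN hcoins t ht
    have hz : ∀ i ∈ Finset.Icc 1 n, x i = 0 := by
      intro i hi
      have := Finset.single_le_sum (f := x) (fun i _ => Nat.zero_le _) hi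
      omega
    have hzz : ∑ i ∈ Finset.Icc 1 n, c i * x i = 0 := by
      rw [Finset.sum_congr rfl (fun i hi => by rw [hz i hi, Nat.mul_zero])]
      simp
    refine ⟨x, fun i => le_refl _, ht, by omega⟩
  | succ N IH =>
    intro x hxN hcoins t ht
    rcases Nat.lt_or_ge (∑ i ∈ Finset.Icc 1 n, c i * x i) (t + D) with h | h
    · exact ⟨x, fun i => le_refl _, ht, h⟩
    · have hpos : 0 < ∑ i ∈ Finset.Icc 1 n, c i * x i := by omega
      have hne : ∃ i₀ ∈ Finset.Icc 1 n, x i₀ ≠ 0 := by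
        by_contra hcon
        push_neg at hcon
        rw [Finset.sum_congr rfl (fun i hi => by rw [hcon i hi, Nat.mul_zero])] at hpos
        simp at hpos
      obtain ⟨i₀, hi₀, hxi₀⟩ := hne
      have hci₀ := hcoins i₀ hi₀ hxi₀
      set x' : ℕ → ℕ := fun i => x i - if i = i₀ then 1 else 0 with hx'def
      have hx'le : ∀ i, x' i ≤ x i := fun i => Nat.sub_le _ _
      have hite : ∀ i ∈ Finset.Icc 1 n, (if i = i₀ then 1 else 0) ≤ x i := by
        intro i _; split
        · subst ‹i = i₀›; omega
        · exact Nat.zero_le _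
      have hcnt : ∑ i ∈ Finset.Icc 1 n, x' i = (∑ i ∈ Finset.Icc 1 n, x i) - 1 := by
        simp only [hx'def]
        rw [Finset.sum_tsub_distrib _ hite, sum_ite_one hi₀ 1]
      have hsum : ∑ i ∈ Finset.Icc 1 n, c i * x' i
          = (∑ i ∈ Finset.Icc 1 n, c i * x i) - c i₀ := by
        simp only [hx'def, Nat.mul_sub]
        rw [Finset.sum_tsub_distrib _ (fun i hi =>
          Nat.mul_le_mul_left (c i) (hite i hi)), sum_mul_ite hi₀ 1, Nat.mul_one]
      have hxpos : 1 ≤ ∑ i ∈ Finset.Icc 1 n, x i :=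
        le_trans (by omega) (Finset.single_le_sum (f := x) (fun i _ => Nat.zero_le _) hi₀)
      obtain ⟨y, hy1, hy2, hy3⟩ := IH x' (by omega) (fun i hi hne =>
        hcoins i hi (by intro hc; apply hne; simp [hx'def, hc])) t (by omega)
      exact ⟨y, fun i => le_trans (hy1 i) (hx'le i), hy2, hy3⟩

end P5

theorem case_two_c5_sub_c3 (c : ℕ → ℕ) (hsys : IsSystem 6 c)
    (h6 : c 6 = 2 * c 5 - c 3)
    (hC : Canonical 6 c) (hC' : ¬ Canonical 5 c) :
    (c 3 = 2 * c 2 - 1 ∧ c 5 = c 2 + c 4 - 1 ∧ c 6 = 2 * c 4 - 1) ∨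
      (c 3 = 2 * c 2 ∧ c 5 = c 2 + c 4 ∧ c 6 = 2 * c 4) := by
  have hs5 : IsSystem 5 c := isSystem_of_succ (n := 5) hsys
  have h1 : c 1 = 1 := hsys.1
  have hmono6 : ∀ i j : ℕ, 1 ≤ i → i < j → j ≤ 6 → c i < c j := fun i j hi hij hj =>
    hsys.2 (Set.mem_Icc.2 ⟨hi, by omega⟩) (Set.mem_Icc.2 ⟨by omega, hj⟩) hij
  have h12 := hmono6 1 2 (by omega) (by omega) (by omega)
  have h23 := hmono6 2 3 (by omega) (by omega) (by omega)
  have h34 := hmono6 3 4 (by omega) (by omega) (by omega)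
  have h45 := hmono6 4 5 (by omega) (by omega) (by omega)
  have h56 := hmono6 5 6 (by omega) (by omega) (by omega)
  -- greedy step lemmas for the 5-system
  have step5 : ∀ v, c 5 ≤ v → grd 5 c v = grd 5 c (v - c 5) + 1 := by
    intro v hv
    refine grd_step hs5 (Finset.mem_Icc.2 (by omega)) hv ?_
    intro i hi hile
    exact coin_mono hs5 hi (Finset.mem_Icc.2 (by omega)) (Finset.mem_Icc.1 hi).2
  have step4 : ∀ v, c 4 ≤ v → v < c 5 → grd 5 c v = grd 5 c (v - c 4) + 1 := by
    intro v hv hv'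
    refine grd_step hs5 (Finset.mem_Icc.2 (by omega)) hv ?_
    intro i hi hile
    rw [Finset.mem_Icc] at hi
    obtain ⟨hi1, hi2⟩ := hi
    interval_cases i <;> omega
  have step3 : ∀ v, c 3 ≤ v → v < c 4 → grd 5 c v = grd 5 c (v - c 3) + 1 := by
    intro v hv hv'
    refine grd_step hs5 (Finset.mem_Icc.2 (by omega)) hv ?_
    intro i hi hile
    rw [Finset.mem_Icc] at hi
    obtain ⟨hi1, hi2⟩ := hi
    interval_cases i <;> omega
  have step2 : ∀ v, c 2 ≤ v → v < c 3 → grd 5 c v = grd 5 c (v - c 2) + 1 := by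
    intro v hv hv'
    refine grd_step hs5 (Finset.mem_Icc.2 (by omega)) hv ?_
    intro i hi hile
    rw [Finset.mem_Icc] at hi
    obtain ⟨hi1, hi2⟩ := hi
    interval_cases i <;> omega
  -- greedy step lemmas for the 6-system
  have step6top : ∀ v, c 6 ≤ v → grd 6 c v = grd 6 c (v - c 6) + 1 := by
    intro v hv
    refine grd_step hsys (Finset.mem_Icc.2 (by omega)) hv ?_
    intro i hi hile
    exact coin_mono hsys hi (Finset.mem_Icc.2 (by omega)) (Finset.mem_Icc.1 hi).2
  have step6_5 : ∀ v, c 5 ≤ v → v < c 6 → grd 6 c v = grd 6 c (v - c 5) + 1 := by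
    intro v hv hv'
    refine grd_step hsys (Finset.mem_Icc.2 (by omega)) hv ?_
    intro i hi hile
    rw [Finset.mem_Icc] at hi
    obtain ⟨hi1, hi2⟩ := hi
    interval_cases i <;> omega
  have step6_4 : ∀ v, c 4 ≤ v → v < c 5 → grd 6 c v = grd 6 c (v - c 4) + 1 := by
    intro v hv hv'
    refine grd_step hsys (Finset.mem_Icc.2 (by omega)) hv ?_
    intro i hi hile
    rw [Finset.mem_Icc] at hi
    obtain ⟨hi1, hi2⟩ := hi
    interval_cases i <;> omega
  -- minimal counterexample of the 5-system
  obtain ⟨w, hwcex, hwmin'⟩ := exists_min_cex hs5 (by omega) hC'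
  obtain ⟨hw0, hwlt⟩ := hwcex
  have hmin : ∀ u, u < w → opt 5 c u = grd 5 c u := by
    intro u hu
    rcases Nat.eq_zero_or_pos u with rfl | hupos
    · rw [opt_zero, grd_zero]
    · have hnc := hwmin' u hu
      unfold IsCex at hnc
      have hle := opt_le_grd hs5 (by omega) u
      omega
  -- all values below c 6 are fine for the 5-system
  have hK1 : ∀ v, 0 < v → v < c 6 → opt 5 c v = grd 5 c v := by
    intro v hv0 hv
    have e1 : grd 6 c v = grd 5 c v := grd_restrict (n := 5) hsys (by omega) v hv
    have e2 : opt 6 c v = grd 6 c v := hC v hv0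
    have e3 : opt 6 c v ≤ opt 5 c v := opt_succ_le (n := 5) hsys (by omega) v
    have e4 : opt 5 c v ≤ grd 5 c v := opt_le_grd hs5 (by omega) v
    omega
  -- the minimal counterexample is at least c 6
  have hwf : c 6 ≤ w := by
    by_contra hcon
    have := hK1 w hw0 (by omega)
    omega
  -- Kozen-Zaks style bound : w < c 4 + c 5
  have heval5 : grd 5 c (w - c 5) + 1 = grd 5 c w := (step5 w (by omega)).symm
  have husese : ∀ x : ℕ → ℕ, IsRepr 5 c w x → (∑ i ∈ Finset.Icc 1 5, x i = opt 5 c w) →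
      x 5 = 0 := fun x hx hxopt =>
    uses_coin_zero hs5 (by omega) (Finset.mem_Icc.2 (by omega)) hmin hwlt heval5 hx hxopt
  have hwde : w < c 4 + c 5 := by
    by_contra hcon
    push_neg at hcon
    obtain ⟨M, hM, hMopt⟩ := opt_spec hs5 (by omega) w
    have hM5 : M 5 = 0 := husese M hM hMopt
    have hcoins : ∀ i ∈ Finset.Icc 1 5, M i ≠ 0 → c i ≤ c 4 := by
      intro i hi hne
      rw [Finset.mem_Icc] at hi
      obtain ⟨hi1, hi2⟩ := hi
      interval_cases i <;> omega
    obtain ⟨y, hy1, hy2, hy3⟩ := window (n := 5) (c := c) (D := c 4) (by omega)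
      (∑ i ∈ Finset.Icc 1 5, M i) M (le_refl _) hcoins (c 5) (by rw [hM]; omega)
    set s := ∑ i ∈ Finset.Icc 1 5, c i * y i with hsdef
    have hstep : grd 5 c s = grd 5 c (s - c 5) + 1 := step5 s (by omega)
    obtain ⟨z, hzrep, hzopt, hz5⟩ := exchange hs5 (by omega)
      (Finset.mem_Icc.2 (by omega)) hmin hM hMopt hy1 rfl (by omega) (by omega) hstep
    have := husese z hzrep hzopt
    omega
  -- membership abbreviations
  have m62 : (2:ℕ) ∈ Finset.Icc 1 6 := Finset.mem_Icc.2 (by omega)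
  have m63 : (3:ℕ) ∈ Finset.Icc 1 6 := Finset.mem_Icc.2 (by omega)
  have m64 : (4:ℕ) ∈ Finset.Icc 1 6 := Finset.mem_Icc.2 (by omega)
  have m65 : (5:ℕ) ∈ Finset.Icc 1 6 := Finset.mem_Icc.2 (by omega)
  have m53 : (3:ℕ) ∈ Finset.Icc 1 5 := Finset.mem_Icc.2 (by omega)
  have m54 : (4:ℕ) ∈ Finset.Icc 1 5 := Finset.mem_Icc.2 (by omega)
  have m55 : (5:ℕ) ∈ Finset.Icc 1 5 := Finset.mem_Icc.2 (by omega)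
  -- canonicity test at c 4 + c 5
  have hde : c 3 + c 4 = c 5 + 1 ∨ c 3 + c 4 = c 5 + c 2 := by
    have hstep := step6top (c 4 + c 5) (by omega)
    have htwo := two_coin_le hsys (by omega) m64 m65
    have hcan := hC (c 4 + c 5) (by omega)
    have hrem : grd 6 c (c 4 + c 5 - c 6) ≤ 1 := by omega
    obtain ⟨j, hj, hjeq⟩ := coin_of_grd_le_one hsys (by omega)
      (show 0 < c 4 + c 5 - c 6 by omega) hrem
    rw [Finset.mem_Icc] at hj
    obtain ⟨hj1, hj2⟩ := hj
    have hjb : j ≤ 2 := by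
      by_contra hcon
      have := coin_mono hsys (j := j) m63 (Finset.mem_Icc.2 ⟨by omega, by omega⟩) (by omega)
      omega
    interval_cases j <;> omega
  rcases hde with hI | hII
  · -- CASE I : c 5 = c 3 + c 4 - 1.  Derive a contradiction.
    exfalso
    have hw : w = c 6 := by omega
    -- test at 2 c 4
    have hd : c 4 + 1 = c 2 + c 3 ∨ c 4 + 1 = 2 * c 3 := by
      have hstep := step6_5 (c 4 + c 4) (by omega) (by omega)
      have htwo := two_coin_le hsys (by omega) m64 m64
      have hcan := hC (c 4 + c 4) (by omega)
      have hrem : grd 6 c (c 4 + c 4 - c 5) ≤ 1 := by omega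
      obtain ⟨j, hj, hjeq⟩ := coin_of_grd_le_one hsys (by omega)
        (show 0 < c 4 + c 4 - c 5 by omega) hrem
      rw [Finset.mem_Icc] at hj
      obtain ⟨hj1, hj2⟩ := hj
      have hjb : j ≤ 3 := by
        by_contra hcon
        have := coin_mono hsys (j := j) m64 (Finset.mem_Icc.2 ⟨by omega, by omega⟩) (by omega)
        omega
      interval_cases j <;> omega
    rcases hd with hd1 | hd2
    · -- I.2 : c 4 = c 2 + c 3 - 1
      by_cases ha2 : c 2 = 2
      · -- then w = 3  * c 3 and grd = 2, so w would be a coin: absurd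
        have hgw : grd 5 c w = 2 := by
          have e1 := step5 w (by omega)
          have e2 : grd 5 c (w - c 5) = 1 := by
            rw [show w - c 5 = c 3 by omega]
            exact grd_coin hs5 m53
          omega
        have hop : opt 5 c w ≤ 1 := by omega
        obtain ⟨j, hj, hjeq⟩ := coin_of_opt_le_one hs5 (by omega) (by omega) hop
        have hjle : c j ≤ c 5 :=
          coin_mono hs5 hj m55 (Finset.mem_Icc.1 hj).2
        omega
      · -- c 2 ≥ 3 : test at 2 c 3 gives c 3 = 2 c 2 - 1
        have ha3 : 3 ≤ c 2 := by omega
        have hb : c 3 + 1 = 2 * c 2 := by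
          have hstep := step6_4 (c 3 + c 3) (by omega) (by omega)
          have htwo := two_coin_le hsys (by omega) m63 m63
          have hcan := hC (c 3 + c 3) (by omega)
          have hrem : grd 6 c (c 3 + c 3 - c 4) ≤ 1 := by omega
          obtain ⟨j, hj, hjeq⟩ := coin_of_grd_le_one hsys (by omega)
            (show 0 < c 3 + c 3 - c 4 by omega) hrem
          rw [Finset.mem_Icc] at hj
          obtain ⟨hj1, hj2⟩ := hj
          have hjb : j ≤ 2 := by
            by_contra hcon
            have := coin_mono hsys (j := j) m63 (Finset.mem_Icc.2 ⟨by omega, by omega⟩) (by omega)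
            omega
          interval_cases j <;> omega
        -- coins : (1, a, 2a-1, 3a-2, 5a-4), w = 8a-7
        have hones := grd_ones hs5 (by omega)
        have hA : grd 5 c w = c 2 := by
          rw [step5 w (by omega), show w - c 5 = c 4 - 1 by omega,
            step3 (c 4 - 1) (by omega) (by omega), show c 4 - 1 - c 3 = c 2 - 2 by omega,
            hones (c 2 - 2) (by omega)]
          omega
        have hevalw4 : grd 5 c (w - c 4) + 1 = grd 5 c w := by
          rw [step4 (w - c 4) (by omega) (by omega),
            show w - c 4 - c 4 = 2 * c 2 - 3 by omega,
            step2 (2 * c 2 - 3) (by omega) (by omega),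
            show 2 * c 2 - 3 - c 2 = c 2 - 3 by omega,
            hones (c 2 - 3) (by omega), hA]
          omega
        have hevalw3 : grd 5 c (w - c 3) + 1 = grd 5 c w := by
          rw [step5 (w - c 3) (by omega), show w - c 3 - c 5 = c 2 - 2 by omega,
            hones (c 2 - 2) (by omega), hA]
          omega
        have husesd : ∀ x : ℕ → ℕ, IsRepr 5 c w x →
            (∑ i ∈ Finset.Icc 1 5, x i = opt 5 c w) → x 4 = 0 := fun x hx hxopt =>
          uses_coin_zero hs5 (by omega) m54 hmin hwlt hevalw4 hx hxopt
        have husesb : ∀ x : ℕ → ℕ, IsRepr 5 c w x →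
            (∑ i ∈ Finset.Icc 1 5, x i = opt 5 c w) → x 3 = 0 := fun x hx hxopt =>
          uses_coin_zero hs5 (by omega) m53 hmin hwlt hevalw3 hx hxopt
        obtain ⟨M, hM, hMopt⟩ := opt_spec hs5 (by omega) w
        have hM5 : M 5 = 0 := husese M hM hMopt
        have hM4 : M 4 = 0 := husesd M hM hMopt
        have hM3 : M 3 = 0 := husesb M hM hMopt
        have hcoins : ∀ i ∈ Finset.Icc 1 5, M i ≠ 0 → c i ≤ c 2 := by
          intro i hi hne
          rw [Finset.mem_Icc] at hi
          obtain ⟨hi1, hi2⟩ := hi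
          interval_cases i <;> omega
        obtain ⟨y, hy1, hy2, hy3⟩ := window (n := 5) (c := c) (D := c 2) (by omega)
          (∑ i ∈ Finset.Icc 1 5, M i) M (le_refl _) hcoins (c 3) (by rw [hM]; omega)
        set s := ∑ i ∈ Finset.Icc 1 5, c i * y i with hsdef
        rcases Nat.lt_or_ge s (c 4) with hsc | hsc
        · have hstep : grd 5 c s = grd 5 c (s - c 3) + 1 := step3 s (by omega) hsc
          obtain ⟨z, hzrep, hzopt, hz3⟩ := exchange hs5 (by omega) m53 hmin hM hMopt
            hy1 rfl (by omega) (by omega) hstep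
          have := husesb z hzrep hzopt
          omega
        · have hstep : grd 5 c s = grd 5 c (s - c 4) + 1 := step4 s hsc (by omega)
          obtain ⟨z, hzrep, hzopt, hz4⟩ := exchange hs5 (by omega) m54 hmin hM hMopt
            hy1 rfl (by omega) (by omega) hstep
          have := husesd z hzrep hzopt
          omega
    · -- I.1 : c 4 = 2 c 3 - 1 ; coins (1, a, b, 2b-1, 3b-2), w = 5b-4
      have hA : grd 5 c w = grd 5 c (c 3 - 2) + 2 := by
        rw [step5 w (by omega), show w - c 5 = c 4 - 1 by omega,
          step3 (c 4 - 1) (by omega) (by omega), show c 4 - 1 - c 3 = c 3 - 2 by omega]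
      have hevalw4 : grd 5 c (w - c 4) + 1 = grd 5 c w := by
        have e1 : grd 5 c (w - c 4) = grd 5 c (c 3 - 2) + 1 := by
          rw [step4 (w - c 4) (by omega) (by omega),
            show w - c 4 - c 4 = c 3 - 2 by omega]
        omega
      have hevalw3 : grd 5 c (w - c 3) + 1 = grd 5 c w := by
        have e1 : grd 5 c (w - c 3) = grd 5 c (c 3 - 2) + 1 := by
          rw [step5 (w - c 3) (by omega), show w - c 3 - c 5 = c 3 - 2 by omega]
        omega
      have husesd : ∀ x : ℕ → ℕ, IsRepr 5 c w x →
          (∑ i ∈ Finset.Icc 1 5, x i = opt 5 c w) → x 4 = 0 := fun x hx hxopt =>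
        uses_coin_zero hs5 (by omega) m54 hmin hwlt hevalw4 hx hxopt
      have husesb : ∀ x : ℕ → ℕ, IsRepr 5 c w x →
          (∑ i ∈ Finset.Icc 1 5, x i = opt 5 c w) → x 3 = 0 := fun x hx hxopt =>
        uses_coin_zero hs5 (by omega) m53 hmin hwlt hevalw3 hx hxopt
      obtain ⟨M, hM, hMopt⟩ := opt_spec hs5 (by omega) w
      have hM5 : M 5 = 0 := husese M hM hMopt
      have hM4 : M 4 = 0 := husesd M hM hMopt
      have hM3 : M 3 = 0 := husesb M hM hMopt
      have hcoins : ∀ i ∈ Finset.Icc 1 5, M i ≠ 0 → c i ≤ c 2 := by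
        intro i hi hne
        rw [Finset.mem_Icc] at hi
        obtain ⟨hi1, hi2⟩ := hi
        interval_cases i <;> omega
      obtain ⟨y, hy1, hy2, hy3⟩ := window (n := 5) (c := c) (D := c 2) (by omega)
        (∑ i ∈ Finset.Icc 1 5, M i) M (le_refl _) hcoins (c 3) (by rw [hM]; omega)
      set s := ∑ i ∈ Finset.Icc 1 5, c i * y i with hsdef
      have hstep : grd 5 c s = grd 5 c (s - c 3) + 1 := step3 s (by omega) (by omega)
      obtain ⟨z, hzrep, hzopt, hz3⟩ := exchange hs5 (by omega) m53 hmin hM hMopt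
        hy1 rfl (by omega) (by omega) hstep
      have := husesb z hzrep hzopt
      omega
  · -- CASE II : c 5 + c 2 = c 3 + c 4
    have hc6 : c 6 + c 2 = c 4 + c 5 := by omega
    rcases le_or_gt (c 3) (2 * c 2) with hba | hba
    · -- II.A : conclusion
      have hstep := step6top (c 4 + c 4) (by omega)
      have htwo := two_coin_le hsys (by omega) m64 m64
      have hcan := hC (c 4 + c 4) (by omega)
      have hrem : grd 6 c (c 4 + c 4 - c 6) ≤ 1 := by omega
      rcases Nat.eq_zero_or_pos (c 4 + c 4 - c 6) with hz | hz
      · right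
        refine ⟨by omega, by omega, by omega⟩
      · obtain ⟨j, hj, hjeq⟩ := coin_of_grd_le_one hsys (by omega) hz hrem
        rw [Finset.mem_Icc] at hj
        obtain ⟨hj1, hj2⟩ := hj
        have hjb : j ≤ 1 := by
          by_contra hcon
          have := coin_mono hsys (j := j) m62 (Finset.mem_Icc.2 ⟨by omega, by omega⟩) (by omega)
          omega
        have hj1' : j = 1 := by omega
        subst hj1'
        left
        refine ⟨by omega, by omega, by omega⟩
    · -- II.B : c 3 > 2 c 2, derive a contradiction
      exfalso
      have hd : c 4 + c 2 = 2 * c 3 := by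
        have hstep := step6_5 (c 4 + c 4) (by omega) (by omega)
        have htwo := two_coin_le hsys (by omega) m64 m64
        have hcan := hC (c 4 + c 4) (by omega)
        have hrem : grd 6 c (c 4 + c 4 - c 5) ≤ 1 := by omega
        obtain ⟨j, hj, hjeq⟩ := coin_of_grd_le_one hsys (by omega)
          (show 0 < c 4 + c 4 - c 5 by omega) hrem
        rw [Finset.mem_Icc] at hj
        obtain ⟨hj1, hj2⟩ := hj
        have hjb : j ≤ 3 := by
          by_contra hcon
          have := coin_mono hsys (j := j) m64 (Finset.mem_Icc.2 ⟨by omega, by omega⟩) (by omega)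
          omega
        interval_cases j <;> omega
      -- coins (1, a, b, 2b-a, 3b-2a), c 6 = 5b-4a, c 6 ≤ w ≤ c 6 + a - 1
      have hA : grd 5 c w = grd 5 c (w - c 5 - c 3) + 2 := by
        rw [step5 w (by omega), step3 (w - c 5) (by omega) (by omega)]
      have hevalw4 : grd 5 c (w - c 4) + 1 = grd 5 c w := by
        have e1 : grd 5 c (w - c 4) = grd 5 c (w - c 5 - c 3) + 1 := by
          rw [step4 (w - c 4) (by omega) (by omega),
            show w - c 4 - c 4 = w - c 5 - c 3 by omega]
        omega
      have hevalw3 : grd 5 c (w - c 3) + 1 = grd 5 c w := by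
        have e1 : grd 5 c (w - c 3) = grd 5 c (w - c 5 - c 3) + 1 := by
          rw [step5 (w - c 3) (by omega), show w - c 3 - c 5 = w - c 5 - c 3 by omega]
        omega
      have husesd : ∀ x : ℕ → ℕ, IsRepr 5 c w x →
          (∑ i ∈ Finset.Icc 1 5, x i = opt 5 c w) → x 4 = 0 := fun x hx hxopt =>
        uses_coin_zero hs5 (by omega) m54 hmin hwlt hevalw4 hx hxopt
      have husesb : ∀ x : ℕ → ℕ, IsRepr 5 c w x →
          (∑ i ∈ Finset.Icc 1 5, x i = opt 5 c w) → x 3 = 0 := fun x hx hxopt =>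
        uses_coin_zero hs5 (by omega) m53 hmin hwlt hevalw3 hx hxopt
      obtain ⟨M, hM, hMopt⟩ := opt_spec hs5 (by omega) w
      have hM5 : M 5 = 0 := husese M hM hMopt
      have hM4 : M 4 = 0 := husesd M hM hMopt
      have hM3 : M 3 = 0 := husesb M hM hMopt
      have hcoins : ∀ i ∈ Finset.Icc 1 5, M i ≠ 0 → c i ≤ c 2 := by
        intro i hi hne
        rw [Finset.mem_Icc] at hi
        obtain ⟨hi1, hi2⟩ := hi
        interval_cases i <;> omega
      obtain ⟨y, hy1, hy2, hy3⟩ := window (n := 5) (c := c) (D := c 2) (by omega)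
        (∑ i ∈ Finset.Icc 1 5, M i) M (le_refl _) hcoins (c 3) (by rw [hM]; omega)
      set s := ∑ i ∈ Finset.Icc 1 5, c i * y i with hsdef
      have hstep : grd 5 c s = grd 5 c (s - c 3) + 1 := step3 s (by omega) (by omega)
      obtain ⟨z, hzrep, hzopt, hz3⟩ := exchange hs5 (by omega) m53 hmin hM hMopt
        hy1 rfl (by omega) (by omega) hstep
      have := husesb z hzrep hzopt
      omega
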